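/- Let M be a comultiplication R-module and N a nonzero submodule such that Ann_R(N) is a 2-absorbing ideal of R. Then N is a strongly 2-absorbing second submodule of M. -/

import Mathlib

open Pointwise

/-- A proper ideal `I` is 2-absorbing if `a*b*c ∈ I` implies `a*b ∈ I` or `a*c ∈ I`
or `b*c ∈ I`. -/
def Is2AbsorbingIdeal {R : Type*} [CommRing R] (I : Ideal R) : Prop :=
  I ≠ ⊤ ∧ ∀ a b c : R, a * b * c ∈ I → a * b ∈ I ∨ a * c ∈ I ∨ b * c ∈ I

/-- An `R`-module `M` is a comultiplication module if every submodule `N` satisfies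
`N = (0 :_M Ann_R(N))`. -/
def IsComultiplicationModule (R M : Type*) [CommRing R] [AddCommGroup M] [Module R M] : Prop :=
  ∀ (N : Submodule R M) (m : M), m ∈ N ↔ ∀ r ∈ N.annihilator, r • m = 0

/-- A nonzero submodule `N` is strongly 2-absorbing second: whenever `a b : R` and
`K` is a submodule with `a • b • N ⊆ K`, then `a • N ⊆ K` or `b • N ⊆ K` or
`a • b • N = 0`. -/
def IsStrongly2AbsorbingSecond {R M : Type*} [CommRing R] [AddCommGroup M] [Module R M]
    (N : Submodule R M) : Prop :=
  N ≠ ⊥ ∧ ∀ (a b : R) (K : Submodule R M), a • b • N ≤ K →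
    a • N ≤ K ∨ b • N ≤ K ∨ a • b • N = ⊥

theorem strongly2AbsorbingSecond_of_ann_2absorbing
    {R M : Type*} [CommRing R] [AddCommGroup M] [Module R M]
    (hM : IsComultiplicationModule R M) (N : Submodule R M) (hne : N ≠ ⊥)
    (h : Is2AbsorbingIdeal N.annihilator) :
    IsStrongly2AbsorbingSecond N := by
  classical
  refine ⟨hne, ?_⟩
  intro a b K hK
  by_cases hab : a • b • N = ⊥
  · exact Or.inr (Or.inr hab)
  have habann : a * b ∉ N.annihilator := by
    intro hmem
    apply hab
    rw [Submodule.eq_bot_iff]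
    rintro x hx
    obtain ⟨y, hy, rfl⟩ := hx
    obtain ⟨n, hn, rfl⟩ := hy
    simp only [DistribSMul.toLinearMap_apply]
    rw [← mul_smul]
    exact Submodule.mem_annihilator.mp hmem n hn
  have key : ∀ r ∈ K.annihilator, r * a ∈ N.annihilator ∨ r * b ∈ N.annihilator := by
    intro r hr
    have hrab : r * a * b ∈ N.annihilator := by
      rw [Submodule.mem_annihilator]
      intro n hn
      have hmemK : a • b • n ∈ K :=
        hK (Submodule.smul_mem_pointwise_smul _ _ _
          (Submodule.smul_mem_pointwise_smul _ _ _ hn))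
      have h0 := Submodule.mem_annihilator.mp hr _ hmemK
      calc (r * a * b) • n = r • a • b • n := by rw [mul_smul, mul_smul]
        _ = 0 := h0
    rcases h.2 r a b hrab with h1 | h2 | h3
    · exact Or.inl h1
    · exact Or.inr h2
    · exact absurd h3 habann
  have haK : (∀ r ∈ K.annihilator, r * a ∈ N.annihilator) → a • N ≤ K := by
    intro hall x hx
    obtain ⟨n, hn, rfl⟩ := hx
    rw [hM K]
    intro r hr
    simp only [DistribSMul.toLinearMap_apply]
    rw [← mul_smul]
    exact Submodule.mem_annihilator.mp (hall r hr) n hn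
  have hbK : (∀ r ∈ K.annihilator, r * b ∈ N.annihilator) → b • N ≤ K := by
    intro hall x hx
    obtain ⟨n, hn, rfl⟩ := hx
    rw [hM K]
    intro r hr
    simp only [DistribSMul.toLinearMap_apply]
    rw [← mul_smul]
    exact Submodule.mem_annihilator.mp (hall r hr) n hn
  by_cases ha : ∀ r ∈ K.annihilator, r * a ∈ N.annihilator
  · exact Or.inl (haK ha)
  by_cases hb : ∀ r ∈ K.annihilator, r * b ∈ N.annihilator
  · exact Or.inr (Or.inl (hbK hb))
  exfalso
  push_neg at ha hb
  obtain ⟨r1, hr1K, hr1⟩ := ha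
  obtain ⟨r2, hr2K, hr2⟩ := hb
  have hr1b : r1 * b ∈ N.annihilator := (key r1 hr1K).resolve_left hr1
  have hr2a : r2 * a ∈ N.annihilator := (key r2 hr2K).resolve_right hr2
  rcases key (r1 + r2) (Submodule.add_mem _ hr1K hr2K) with hsum | hsum
  · apply hr1
    have : (r1 + r2) * a - r2 * a ∈ N.annihilator := Submodule.sub_mem _ hsum hr2a
    simpa [add_mul] using this
  · apply hr2
    have : (r1 + r2) * b - r1 * b ∈ N.annihilator := Submodule.sub_mem _ hsum hr1b
    simpa [add_mul] using this
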